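/- Let σy = !![0, −I; I, 0], σz = !![1, 0; 0, −1] ∈ Matrix (Fin 2) (Fin 2) ℂ, let |±⟩ := (1/√2)·(e₀ ± e₁) ∈ ℂ², and define the unit vectors Φ₊ := (1/√2)·(|+⟩ ⊗ |+⟩ + |−⟩ ⊗ |−⟩) and Φ₋ := (1/√2)·(|+⟩ ⊗ |+⟩ − |−⟩ ⊗ |−⟩) in ℂ² ⊗ ℂ² ≅ (Fin 2 × Fin 2) → ℂ. Define the observables A₀ := (σy − σz)/√2, A₁ := (σy + σz)/√2, B₀ := σy, B₁ := σz, and the CHSH operator S := A₀ ⊗ B₀ + A₀ ⊗ B₁ + A₁ ⊗ B₀ − A₁ ⊗ B₁ (Kronecker products). Then ⟨Φ₊, S Φ₊⟩ = −2√2 and ⟨Φ₋, S Φ₋⟩ = +2√2. -/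

import Mathlib

open Matrix Kronecker

noncomputable section

/-- Pauli matrix σy. -/
def σy : Matrix (Fin 2) (Fin 2) ℂ := !![0, -Complex.I; Complex.I, 0]

/-- Pauli matrix σz. -/
def σz : Matrix (Fin 2) (Fin 2) ℂ := !![1, 0; 0, -1]

/-- The state `|+⟩ = (e₀ + e₁)/√2`. -/
def plus : Fin 2 → ℂ := fun i => (1 / (Real.sqrt 2 : ℂ)) * (![1, 0] i + ![0, 1] i)

/-- The state `|−⟩ = (e₀ − e₁)/√2`. -/
def minus : Fin 2 → ℂ := fun i => (1 / (Real.sqrt 2 : ℂ)) * (![1, 0] i - ![0, 1] i)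

/-- `Φ₊ = (|+⟩⊗|+⟩ + |−⟩⊗|−⟩)/√2`. -/
def Φp : Fin 2 × Fin 2 → ℂ :=
  fun p => (1 / (Real.sqrt 2 : ℂ)) * (plus p.1 * plus p.2 + minus p.1 * minus p.2)

/-- `Φ₋ = (|+⟩⊗|+⟩ − |−⟩⊗|−⟩)/√2`. -/
def Φm : Fin 2 × Fin 2 → ℂ :=
  fun p => (1 / (Real.sqrt 2 : ℂ)) * (plus p.1 * plus p.2 - minus p.1 * minus p.2)

/-- `A₀ = (σy − σz)/√2`. -/
def A₀ : Matrix (Fin 2) (Fin 2) ℂ := (1 / (Real.sqrt 2 : ℂ)) • (σy - σz)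

/-- `A₁ = (σy + σz)/√2`. -/
def A₁ : Matrix (Fin 2) (Fin 2) ℂ := (1 / (Real.sqrt 2 : ℂ)) • (σy + σz)

/-- The CHSH operator `S = A₀⊗σy + A₀⊗σz + A₁⊗σy − A₁⊗σz`. -/
def S : Matrix (Fin 2 × Fin 2) (Fin 2 × Fin 2) ℂ :=
  A₀ ⊗ₖ σy + A₀ ⊗ₖ σz + A₁ ⊗ₖ σy - A₁ ⊗ₖ σz

set_option maxHeartbeats 2000000 in
/-- The states `Φ±` maximally violate the CHSH inequality:
`⟨Φ₊, S Φ₊⟩ = −2√2` and `⟨Φ₋, S Φ₋⟩ = +2√2`. -/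
theorem chsh_maximal_violation :
    (∑ p : Fin 2 × Fin 2, star (Φp p) * S.mulVec Φp p) = -((2 * Real.sqrt 2 : ℝ) : ℂ) ∧
    (∑ p : Fin 2 × Fin 2, star (Φm p) * S.mulVec Φm p) = ((2 * Real.sqrt 2 : ℝ) : ℂ) := by

  have h2 : (Real.sqrt 2 : ℂ) * (Real.sqrt 2 : ℂ) = 2 := by
    rw [← Complex.ofReal_mul]
    norm_num [Real.mul_self_sqrt]
  have hne : (Real.sqrt 2 : ℂ) ≠ 0 := by
    intro h
    rw [h, mul_zero] at h2
    norm_num at h2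
  constructor <;>
  · simp only [S, A₀, A₁, σy, σz, Φp, Φm, plus, minus, Matrix.mulVec, dotProduct,
      Fintype.sum_prod_type, Fin.sum_univ_two, Matrix.kroneckerMap_apply,
      Matrix.add_apply, Matrix.sub_apply, Matrix.smul_apply, Matrix.of_apply, Matrix.cons_val_zero,
      Matrix.cons_val_one, Matrix.head_cons, Matrix.head_fin_const, smul_eq_mul,
      star_mul', Complex.star_def, map_add, map_sub, _root_.map_mul, _root_.map_one, map_zero,
      Complex.conj_I, Complex.conj_ofReal, map_div₀, map_ofNat]
    set_option maxHeartbeats 1000000 in field_simp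
    ring_nf
    have key : ((Real.sqrt 2:ℂ))⁻¹ ^ 7 * 32 = Real.sqrt 2 * 2 := by
      rw [inv_pow]
      field_simp
      linear_combination (-2*((Real.sqrt 2:ℂ)^6 + 2*(Real.sqrt 2:ℂ)^4 +
        4*(Real.sqrt 2:ℂ)^2 + 8)) * h2
    push_cast
    rw [Complex.I_sq, show (Real.sqrt 2:ℂ) ^ 7 * ((Real.sqrt 2:ℂ) * 2) = 32 by
      linear_combination (2*((Real.sqrt 2:ℂ)^6 + 2*(Real.sqrt 2:ℂ)^4 +
        4*(Real.sqrt 2:ℂ)^2 + 8)) * h2]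
    ring

end
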